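/- Let γ : [a, b] → ℝⁿ be a rectifiable curve and let l_γ : [a, b] → ℝ be its length function, l_γ(t) = length of γ|_{[a,t]}. Then for almost every t ∈ [a, b], both l_γ'(t) and γ'(t) exist and l_γ'(t) = |γ'(t)|. -/

import Mathlib

open Set MeasureTheory Filter Topology ENNReal

lemma aux_chain {E : Type*} [PseudoEMetricSpace E] (f : ℝ → E) {n : ℕ} {p q : ℕ → ℝ}
    {lo hi : ℝ} (hpq : ∀ i, i < n → p i ≤ q i) (hqp : ∀ i, i + 1 < n → q i ≤ p (i+1))
    (hlo : ∀ i, i < n → lo ≤ p i) (hhi : ∀ i, i < n → q i ≤ hi) :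
    ∑ i ∈ Finset.range n, edist (f (q i)) (f (p i)) ≤ eVariationOn f (Icc lo hi) := by
  rcases Nat.eq_zero_or_pos n with rfl | hn
  · simp
  set w : ℕ → ℝ := fun j => if j % 2 = 0 then p (j / 2) else q (j / 2) with hw
  have hwmono : MonotoneOn w (Set.Icc 0 (2 * n - 1)) := by
    have key : ∀ j, j + 1 ≤ 2 * n - 1 → w j ≤ w (j + 1) := by
      intro j hj
      have hj' : j + 1 < 2 * n := by omega
      rcases Nat.even_or_odd j with ⟨c, hc⟩ | ⟨c, hc⟩
      · have h1 : j % 2 = 0 := by omega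
        have h2 : (j+1) % 2 = 1 := by omega
        have h3 : (j+1)/2 = j/2 := by omega
        simp only [hw, h1, h2]
        norm_num [h3]
        exact hpq (j/2) (by omega)
      · have h1 : j % 2 = 1 := by omega
        have h2 : (j+1) % 2 = 0 := by omega
        have h3 : (j+1)/2 = j/2 + 1 := by omega
        simp only [hw, h1, h2, h3]
        norm_num
        exact hqp (j/2) (by omega)
    have main : ∀ y, y ≤ 2 * n - 1 → ∀ x, x ≤ y → w x ≤ w y := by
      intro y
      induction y with
      | zero => intro _ x hx; have : x = 0 := by omega
                subst this; exact le_rfl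
      | succ m ih =>
        intro hy x hx
        rcases Nat.lt_or_ge x (m+1) with h | h
        · exact (ih (by omega) x (by omega)).trans (key m hy)
        · have : x = m + 1 := by omega
          subst this; exact le_rfl
    intro x _ y hy hxy
    simp only [Set.mem_Icc] at hy
    exact main y hy.2 x hxy
  have hwmem : ∀ j ∈ Set.Icc 0 (2 * n - 1), w j ∈ Icc lo hi := by
    intro j hj
    simp only [Set.mem_Icc] at hj
    have hj2 : j / 2 < n := by omega
    constructor
    · rcases Nat.even_or_odd j with ⟨c, hc⟩ | ⟨c, hc⟩
      · have h1 : j % 2 = 0 := by omega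
        simpa [hw, h1] using hlo _ hj2
      · have h1 : j % 2 = 1 := by omega
        simp only [hw, h1]
        norm_num
        exact (hlo _ hj2).trans (hpq _ hj2)
    · rcases Nat.even_or_odd j with ⟨c, hc⟩ | ⟨c, hc⟩
      · have h1 : j % 2 = 0 := by omega
        simp only [hw, h1]
        norm_num
        exact (hpq _ hj2).trans (hhi _ hj2)
      · have h1 : j % 2 = 1 := by omega
        simpa [hw, h1] using hhi _ hj2
  have base := eVariationOn.sum_le_of_monotoneOn_Icc (f := f) (m := 0) (n := 2*n-1) hwmono hwmem
  refine le_trans ?_ base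
  -- our terms are the even-index terms of the chain
  have : ∑ i ∈ Finset.range n, edist (f (q i)) (f (p i))
      = ∑ j ∈ (Finset.range n).image (fun i => 2 * i), edist (f (w (j+1))) (f (w j)) := by
    rw [Finset.sum_image (by intro x _ y _ hxy; exact Nat.eq_of_mul_eq_mul_left (by norm_num) hxy)]
    apply Finset.sum_congr rfl
    intro i hi
    have h1 : (2*i) % 2 = 0 := by omega
    have h2 : (2*i+1) % 2 = 1 := by omega
    have h3 : (2*i)/2 = i := by omega
    have h4 : (2*i+1)/2 = i := by omega
    simp [hw, h1, h2, h3, h4]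
  rw [this]
  apply Finset.sum_le_sum_of_subset
  intro j hj
  simp only [Finset.mem_image, Finset.mem_range] at hj ⊢
  obtain ⟨i, hi, rfl⟩ := hj
  simp only [Finset.mem_Ico]
  omega

section
variable {E : Type*} [MetricSpace E] {γ : ℝ → E} {a b : ℝ}

lemma evar_fin (hrect : eVariationOn γ (Icc a b) ≠ ⊤) {s t : ℝ} (hs : a ≤ s) (ht : t ≤ b) :
    eVariationOn γ (Icc s t) ≠ ⊤ :=
  fun h => hrect (top_le_iff.1 (h ▸ eVariationOn.mono γ (Icc_subset_Icc hs ht)))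

lemma evar_incr (hrect : eVariationOn γ (Icc a b) ≠ ⊤) {s t : ℝ} (has : a ≤ s) (hst : s ≤ t)
    (htb : t ≤ b) :
    (eVariationOn γ (Icc a t)).toReal
      = (eVariationOn γ (Icc a s)).toReal + (eVariationOn γ (Icc s t)).toReal := by
  have h := eVariationOn.Icc_add_Icc γ (s := univ) has hst (mem_univ s)
  simp only [univ_inter] at h
  rw [← h, ENNReal.toReal_add (evar_fin hrect le_rfl (hst.trans htb)) (evar_fin hrect has htb)]
end

section
variable {E : Type*} [MetricSpace E]

/-- projection of `t` to the cell `[u i, u (i+1)]` -/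
noncomputable def cpt (u : ℕ → ℝ) (i : ℕ) (t : ℝ) : ℝ := max (u i) (min t (u (i+1)))

/-- inscribed-polygon length function for the partition `u 0 ≤ ... ≤ u m` -/
noncomputable def gfun (γ : ℝ → E) (u : ℕ → ℝ) (m : ℕ) (t : ℝ) : ℝ :=
  ∑ i ∈ Finset.range m, dist (γ (cpt u i t)) (γ (u i))

/-- (clamped) length function -/
noncomputable def Lfun (γ : ℝ → E) (a b t : ℝ) : ℝ :=
  (eVariationOn γ (Icc a (max a (min t b)))).toReal

lemma cpt_mono (u : ℕ → ℝ) (i : ℕ) {s t : ℝ} (hst : s ≤ t) : cpt u i s ≤ cpt u i t := by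
  unfold cpt; gcongr

lemma g_sub_mono {γ : ℝ → E} {a b : ℝ} (hab : a ≤ b)
    (hrect : eVariationOn γ (Icc a b) ≠ ⊤) {u : ℕ → ℝ} {m : ℕ}
    (hu : Monotone u) (hus : ∀ i, u i ∈ Icc a b) {s t : ℝ} (hst : s ≤ t) :
    gfun γ u m t - gfun γ u m s ≤ Lfun γ a b t - Lfun γ a b s := by
  set cs := max a (min s b) with hcs
  set ct := max a (min t b) with hct
  have hacs : a ≤ cs := le_max_left _ _
  have hcsct : cs ≤ ct := by unfold cs ct; gcongr
  have hctb : ct ≤ b := max_le hab (min_le_right _ _)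
  have hL : Lfun γ a b t - Lfun γ a b s = (eVariationOn γ (Icc cs ct)).toReal := by
    unfold Lfun
    rw [evar_incr hrect hacs hcsct hctb]
    ring
  rw [hL]
  have claim1 : ∀ i, i < m → dist (γ (cpt u i t)) (γ (cpt u i s))
      = dist (γ (max cs (min (cpt u i t) ct))) (γ (max cs (min (cpt u i s) ct))) := by
    intro i _
    by_cases h : cpt u i s = cpt u i t
    · rw [h]; simp
    · have hlt : cpt u i s < cpt u i t := lt_of_le_of_ne (cpt_mono u i hst) h
      have hui : u i < t := by
        by_contra hc
        push_neg at hc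
        have h1 : cpt u i t = u i := by
          unfold cpt
          rw [max_eq_left]
          exact (min_le_left _ _).trans hc
        have h2 : cpt u i s = u i := by
          unfold cpt
          rw [max_eq_left]
          exact (min_le_left _ _).trans (hst.trans hc)
        rw [h1, h2] at hlt; exact absurd hlt (lt_irrefl _)
      have hsu : s < u (i+1) := by
        by_contra hc
        push_neg at hc
        have h1 : cpt u i s = u (i+1) := by
          unfold cpt
          rw [min_eq_right hc, max_eq_right (hu (Nat.le_succ i))]
        have h2 : cpt u i t = u (i+1) := by
          unfold cpt
          rw [min_eq_right (hc.trans hst), max_eq_right (hu (Nat.le_succ i))]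
        rw [h1, h2] at hlt; exact absurd hlt (lt_irrefl _)
      have hcslow : cs ≤ cpt u i s := by
        unfold cpt
        apply max_le_max (hus i).1
        rw [min_eq_left hsu.le]
        exact min_le_left _ _
      have hcthigh : cpt u i t ≤ ct := by
        unfold cpt
        apply max_le
        · exact le_max_of_le_right (le_min hui.le (hus i).2)
        · exact le_max_of_le_right (min_le_min le_rfl (hus (i+1)).2)
      have e1 : max cs (min (cpt u i t) ct) = cpt u i t := by
        rw [min_eq_left hcthigh, max_eq_right (hcslow.trans hlt.le)]
      have e2 : max cs (min (cpt u i s) ct) = cpt u i s := by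
        rw [min_eq_left (hlt.le.trans hcthigh), max_eq_right hcslow]
      rw [e1, e2]
  have main : gfun γ u m t - gfun γ u m s
      ≤ ∑ i ∈ Finset.range m, dist (γ (cpt u i t)) (γ (cpt u i s)) := by
    unfold gfun
    rw [← Finset.sum_sub_distrib]
    apply Finset.sum_le_sum
    intro i _
    calc dist (γ (cpt u i t)) (γ (u i)) - dist (γ (cpt u i s)) (γ (u i))
        ≤ |dist (γ (cpt u i t)) (γ (u i)) - dist (γ (cpt u i s)) (γ (u i))| := le_abs_self _
      _ ≤ dist (γ (cpt u i t)) (γ (cpt u i s)) := abs_dist_sub_le _ _ _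
  refine main.trans ?_
  have hchain := aux_chain γ (n := m) (p := fun i => max cs (min (cpt u i s) ct))
      (q := fun i => max cs (min (cpt u i t) ct)) (lo := cs) (hi := ct)
      (fun i _ => by gcongr; exact cpt_mono u i hst)
      (fun i _ => by
        have h1 : cpt u i t ≤ u (i+1) :=
          max_le (hu (Nat.le_succ i)) (min_le_right _ _)
        have h2 : u (i+1) ≤ cpt u (i+1) s := le_max_left _ _
        gcongr
        exact h1.trans h2)
      (fun i _ => le_max_left _ _)
      (fun i _ => max_le hcsct (min_le_right _ _))
  calc ∑ i ∈ Finset.range m, dist (γ (cpt u i t)) (γ (cpt u i s))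
      = ∑ i ∈ Finset.range m,
          (edist (γ (max cs (min (cpt u i t) ct))) (γ (max cs (min (cpt u i s) ct)))).toReal := by
        apply Finset.sum_congr rfl
        intro i hi
        rw [← dist_edist, ← claim1 i (Finset.mem_range.1 hi)]
    _ = (∑ i ∈ Finset.range m,
          edist (γ (max cs (min (cpt u i t) ct))) (γ (max cs (min (cpt u i s) ct)))).toReal := by
        rw [ENNReal.toReal_sum (fun i _ => edist_ne_top _ _)]
    _ ≤ (eVariationOn γ (Icc cs ct)).toReal :=
        ENNReal.toReal_mono (evar_fin hrect hacs hctb) hchain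
end

section
variable {E : Type*} [MetricSpace E]

lemma gfun_le_a {γ : ℝ → E} {a b : ℝ} {u : ℕ → ℝ} {m : ℕ} (hus : ∀ i, u i ∈ Icc a b)
    {t : ℝ} (ht : t ≤ a) : gfun γ u m t = 0 := by
  unfold gfun
  apply Finset.sum_eq_zero
  intro i _
  have : cpt u i t = u i := by
    unfold cpt
    rw [max_eq_left ((min_le_left _ _).trans (ht.trans (hus i).1))]
  rw [this, dist_self]

lemma gfun_ge_b {γ : ℝ → E} {a b : ℝ} {u : ℕ → ℝ} {m : ℕ} (hu : Monotone u)
    (hus : ∀ i, u i ∈ Icc a b) {t : ℝ} (ht : b ≤ t) :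
    gfun γ u m t = ∑ i ∈ Finset.range m, dist (γ (u (i+1))) (γ (u i)) := by
  unfold gfun
  apply Finset.sum_congr rfl
  intro i _
  have : cpt u i t = u (i+1) := by
    unfold cpt
    rw [min_eq_right ((hus (i+1)).2.trans ht), max_eq_right (hu (Nat.le_succ i))]
  rw [this]

lemma Lfun_le_a {γ : ℝ → E} {a b : ℝ} {t : ℝ} (ht : t ≤ a) : Lfun γ a b t = 0 := by
  unfold Lfun
  have : max a (min t b) = a := max_eq_left ((min_le_left _ _).trans ht)
  rw [this, Icc_self, eVariationOn.subsingleton γ subsingleton_singleton]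
  simp

lemma Lfun_ge_b {γ : ℝ → E} {a b : ℝ} (hab : a ≤ b) {t : ℝ} (ht : b ≤ t) :
    Lfun γ a b t = (eVariationOn γ (Icc a b)).toReal := by
  unfold Lfun
  rw [min_eq_right ht, max_eq_right hab]

lemma Lfun_eq {γ : ℝ → E} {a b : ℝ} {t : ℝ} (hat : a ≤ t) (htb : t ≤ b) :
    Lfun γ a b t = (eVariationOn γ (Icc a t)).toReal := by
  unfold Lfun
  rw [min_eq_left htb, max_eq_right hat]

lemma Lfun_mono {γ : ℝ → E} {a b : ℝ} (hab : a ≤ b)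
    (hrect : eVariationOn γ (Icc a b) ≠ ⊤) : Monotone (Lfun γ a b) := by
  intro s t hst
  unfold Lfun
  have h1 : max a (min s b) ≤ max a (min t b) := by gcongr
  exact ENNReal.toReal_mono (evar_fin hrect le_rfl (max_le hab (min_le_right _ _)))
    (eVariationOn.mono γ (Icc_subset_Icc le_rfl h1))

lemma dist_le_Lfun_sub {γ : ℝ → E} {a b : ℝ} (hrect : eVariationOn γ (Icc a b) ≠ ⊤)
    {s t : ℝ} (has : a ≤ s) (hst : s ≤ t) (htb : t ≤ b) :
    dist (γ t) (γ s) ≤ Lfun γ a b t - Lfun γ a b s := by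
  rw [Lfun_eq (has.trans hst) htb, Lfun_eq has (hst.trans htb),
    evar_incr hrect has hst htb]
  rw [dist_edist]
  have h := eVariationOn.edist_le γ (x := t) (y := s) (Set.right_mem_Icc.2 hst)
    (Set.left_mem_Icc.2 hst)
  have := ENNReal.toReal_mono (evar_fin hrect has htb) h
  linarith [this]

lemma gfun_local {γ : ℝ → E} {u : ℕ → ℝ} {m : ℕ} (hu : Monotone u)
    {t : ℝ} (ht : ∀ i, i ≤ m → u i ≠ t) :
    ∃ β, t < β ∧ ∀ s, t < s → s < β → gfun γ u m s - gfun γ u m t ≤ dist (γ s) (γ t) := by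
  set T := (Finset.range (m+1)).filter (fun i => u i < t) with hT
  rcases T.eq_empty_or_nonempty with hTe | hTn
  · -- all u i > t for i ≤ m
    have hgt : ∀ i, i ≤ m → t < u i := by
      intro i hi
      rcases lt_trichotomy (u i) t with h | h | h
      · exact absurd (Finset.mem_filter.2 ⟨Finset.mem_range.2 (by omega), h⟩)
          (hTe ▸ Finset.notMem_empty i)
      · exact absurd h (ht i hi)
      · exact h
    refine ⟨u 0, hgt 0 (Nat.zero_le m), fun s hts hsβ => ?_⟩
    have : ∀ i, i < m → cpt u i s = cpt u i t := by
      intro i hi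
      have h0i : u 0 ≤ u i := hu (Nat.zero_le i)
      have h1 : s < u i := lt_of_lt_of_le hsβ h0i
      have h2 : t < u i := hgt i (by omega)
      unfold cpt
      rw [max_eq_left, max_eq_left]
      · exact (min_le_left _ _).trans h2.le
      · exact (min_le_left _ _).trans h1.le
    have : gfun γ u m s = gfun γ u m t :=
      Finset.sum_congr rfl fun i hi => by rw [this i (Finset.mem_range.1 hi)]
    rw [this]
    simpa using dist_nonneg
  · set j := T.max' hTn with hj
    have hjmem : j ∈ T := T.max'_mem hTn
    have hjm : j ≤ m := by
      have := (Finset.mem_filter.1 hjmem).1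
      simp only [Finset.mem_range] at this; omega
    have hjt : u j < t := (Finset.mem_filter.1 hjmem).2
    have hnext : ∀ i, j < i → i ≤ m → t < u i := by
      intro i hji him
      have hni : i ∉ T := fun hmem => absurd (T.le_max' i hmem) (by omega)
      rcases lt_trichotomy (u i) t with h | h | h
      · exact absurd (Finset.mem_filter.2 ⟨Finset.mem_range.2 (by omega), h⟩) hni
      · exact absurd h (ht i him)
      · exact h
    set β := if h : j + 1 ≤ m then u (j+1) else t + 1 with hβ
    have htβ : t < β := by
      unfold β
      split_ifs with h
      · exact hnext (j+1) (by omega) h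
      · linarith
    refine ⟨β, htβ, fun s hts hsβ => ?_⟩
    have hterm : ∀ i, i < m → i ≠ j → cpt u i s = cpt u i t := by
      intro i him hij
      rcases lt_or_gt_of_ne hij with h | h
      · -- i < j : u (i+1) ≤ u j < t < s
        have h1 : u (i+1) ≤ u j := hu (by omega)
        unfold cpt
        rw [min_eq_right (h1.trans (hjt.le.trans hts.le)), min_eq_right (h1.trans hjt.le)]
      · -- i > j : u i ≥ u (j+1) = β > s > t
        have hjm' : j + 1 ≤ m := by omega
        have h1 : β ≤ u i := by
          unfold β
          rw [dif_pos hjm']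
          exact hu (by omega)
        have h2 : s < u i := lt_of_lt_of_le hsβ h1
        unfold cpt
        rw [max_eq_left ((min_le_left _ _).trans h2.le),
          max_eq_left ((min_le_left _ _).trans (hts.trans h2).le)]
    rcases lt_or_ge j m with hjm' | hjm'
    · have hcj : cpt u j s = s ∧ cpt u j t = t := by
        have hju : s < u (j+1) := by
          have : β = u (j+1) := by unfold β; rw [dif_pos (by omega)]
          rw [← this]; exact hsβ
        constructor
        · unfold cpt
          rw [min_eq_left hju.le, max_eq_right (hjt.le.trans hts.le)]
        · unfold cpt
          rw [min_eq_left (hts.le.trans hju.le), max_eq_right hjt.le]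
      have : gfun γ u m s - gfun γ u m t
          = dist (γ s) (γ (u j)) - dist (γ t) (γ (u j)) := by
        unfold gfun
        rw [← Finset.sum_sub_distrib]
        rw [Finset.sum_eq_single_of_mem j (Finset.mem_range.2 hjm')]
        · rw [hcj.1, hcj.2]
        · intro i hi hij
          rw [hterm i (Finset.mem_range.1 hi) hij, sub_self]
      rw [this]
      exact (le_abs_self _).trans (abs_dist_sub_le _ _ _)
    · have : gfun γ u m s = gfun γ u m t :=
        Finset.sum_congr rfl fun i hi => by
          have hi' := Finset.mem_range.1 hi
          rw [hterm i hi' (by omega)]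
      rw [this]
      simpa using dist_nonneg
end

section
variable {E : Type*} [MetricSpace E]

lemma exists_partition {γ : ℝ → E} {a b : ℝ} (hab : a ≤ b)
    (hrect : eVariationOn γ (Icc a b) ≠ ⊤) {ε : ℝ} (hε : 0 < ε) :
    ∃ m : ℕ, ∃ u : ℕ → ℝ, Monotone u ∧ (∀ i, u i ∈ Icc a b) ∧
      (eVariationOn γ (Icc a b)).toReal
        - ∑ i ∈ Finset.range m, dist (γ (u (i+1))) (γ (u i)) ≤ ε := by
  set V := eVariationOn γ (Icc a b) with hV
  rcases le_or_gt V (ENNReal.ofReal ε) with h | h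
  · refine ⟨0, fun _ => a, monotone_const, fun _ => Set.left_mem_Icc.2 hab, ?_⟩
    simp only [Finset.range_zero, Finset.sum_empty, sub_zero]
    calc V.toReal ≤ (ENNReal.ofReal ε).toReal := ENNReal.toReal_mono ENNReal.ofReal_ne_top h
      _ = ε := ENNReal.toReal_ofReal hε.le
  · have hVne : V ≠ 0 := by
      intro h0; rw [h0] at h; exact absurd h (by simp)
    have hlt : V - ENNReal.ofReal ε < V := ENNReal.sub_lt_self hrect hVne (by simpa using hε)
    rw [hV, eVariationOn] at hlt
    conv at hlt => rw [lt_iSup_iff]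
    obtain ⟨⟨m, u, hu, hus⟩, hp⟩ := hlt
    refine ⟨m, u, hu, hus, ?_⟩
    have hsum : ∑ i ∈ Finset.range m, dist (γ (u (i+1))) (γ (u i))
        = (∑ i ∈ Finset.range m, edist (γ (u (i+1))) (γ (u i))).toReal := by
      rw [ENNReal.toReal_sum (fun i _ => edist_ne_top _ _)]
      exact Finset.sum_congr rfl fun i _ => dist_edist _ _
    rw [hsum]
    have hSfin : (∑ i ∈ Finset.range m, edist (γ (u (i+1))) (γ (u i))) ≠ ⊤ := by
      refine ne_top_of_le_ne_top hrect ?_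
      exact eVariationOn.sum_le (f := γ) (n := m) hu hus
    have hp' : V - ENNReal.ofReal ε
        < ∑ i ∈ Finset.range m, edist (γ (u (i+1))) (γ (u i)) := hp
    have h2 := ENNReal.toReal_mono hSfin hp'.le
    rw [ENNReal.toReal_sub_of_le h.le hrect, ENNReal.toReal_ofReal hε.le] at h2
    linarith
end

lemma stieltjes_tendsto_atTop {h : ℝ → ℝ} (hm : Monotone h) {B : ℝ}
    (hc : ∀ x, B ≤ x → h x = h B) :
    Tendsto hm.stieltjesFunction atTop (𝓝 (h B)) := by
  have hval : ∀ x, B ≤ x → hm.stieltjesFunction x = h B := by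
    intro x hx
    rw [hm.stieltjesFunction_eq]
    apply rightLim_eq_of_tendsto
    apply Tendsto.congr' _ tendsto_const_nhds
    filter_upwards [self_mem_nhdsWithin] with s hs
    exact (hc s (hx.trans (le_of_lt hs))).symm
  apply Tendsto.congr' _ tendsto_const_nhds
  filter_upwards [eventually_ge_atTop B] with x hx
  exact (hval x hx).symm

lemma stieltjes_tendsto_atBot {h : ℝ → ℝ} (hm : Monotone h) {A : ℝ}
    (hc : ∀ x, x ≤ A → h x = h A) :
    Tendsto hm.stieltjesFunction atBot (𝓝 (h A)) := by
  have hval : ∀ x, x < A → hm.stieltjesFunction x = h A := by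
    intro x hx
    rw [hm.stieltjesFunction_eq]
    apply rightLim_eq_of_tendsto
    apply Tendsto.congr' _ tendsto_const_nhds
    filter_upwards [Ioo_mem_nhdsGT_of_mem ⟨le_rfl, hx⟩] with s hs
    exact (hc s hs.2.le).symm
  apply Tendsto.congr' _ tendsto_const_nhds
  filter_upwards [eventually_lt_atBot A] with x hx
  exact (hval x hx).symm

lemma ae_deriv_seq {h : ℕ → ℝ → ℝ} (hmono : ∀ k, Monotone (h k)) {A B : ℝ}
    (hclo : ∀ k x, x ≤ A → h k x = h k A) (hchi : ∀ k x, B ≤ x → h k x = h k B)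
    (hmass : ∀ k, h k B - h k A ≤ (1/2 : ℝ)^k) :
    ∀ᵐ x, ∃ d : ℕ → ℝ, (∀ k, HasDerivAt (h k) (d k) x)
      ∧ (∀ k, 0 ≤ d k) ∧ Tendsto d atTop (𝓝 0) := by
  set μ : ℕ → Measure ℝ := fun k => (hmono k).stieltjesFunction.measure with hμ
  set ρ : ℕ → ℝ → ℝ≥0∞ := fun k x => Measure.rnDeriv (μ k) volume x with hρ
  have hμuniv : ∀ k, μ k univ ≤ ENNReal.ofReal ((1/2 : ℝ)^k) := by
    intro k
    rw [StieltjesFunction.measure_univ _ (stieltjes_tendsto_atBot (hmono k) (hclo k))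
      (stieltjes_tendsto_atTop (hmono k) (hchi k))]
    exact ENNReal.ofReal_le_ofReal (hmass k)
  have hmeas : ∀ k, Measurable (ρ k) := fun k => Measure.measurable_rnDeriv _ _
  have hsum : ∫⁻ x, ∑' k, ρ k x ≠ ⊤ := by
    rw [lintegral_tsum (fun k => (hmeas k).aemeasurable)]
    have hle : ∑' k, ∫⁻ x, ρ k x ≤ ∑' k : ℕ, ENNReal.ofReal ((1/2 : ℝ)^k) :=
      ENNReal.tsum_le_tsum fun k => (Measure.lintegral_rnDeriv_le).trans (hμuniv k)
    refine ne_top_of_le_ne_top ?_ hle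
    have : ∀ k : ℕ, ENNReal.ofReal ((1/2 : ℝ)^k) = (ENNReal.ofReal (1/2))^k := by
      intro k; rw [← ENNReal.ofReal_pow (by norm_num)]
    simp_rw [this]
    rw [ENNReal.tsum_geometric, Ne, ENNReal.inv_eq_top, tsub_eq_zero_iff_le, not_le]
    exact ENNReal.ofReal_lt_one.2 (by norm_num)
  have hfin : ∀ᵐ x, ∑' k, ρ k x ≠ ⊤ := by
    filter_upwards [ae_lt_top (by measurability) hsum] with x hx
    exact hx.ne
  have hderiv : ∀ᵐ x, ∀ k, HasDerivAt (h k) ((ρ k x).toReal) x :=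
    ae_all_iff.2 fun k => (hmono k).ae_hasDerivAt
  filter_upwards [hfin, hderiv] with x hx hd
  refine ⟨fun k => (ρ k x).toReal, hd, fun k => ENNReal.toReal_nonneg, ?_⟩
  have h0 : Tendsto (fun k => ρ k x) atTop (𝓝 0) :=
    ENNReal.tendsto_atTop_zero_of_tsum_ne_top hx
  have := (ENNReal.tendsto_toReal (by simp : (0 : ℝ≥0∞) ≠ ⊤)).comp h0
  simpa [Function.comp_def] using this

theorem length_function_deriv_ae (n : ℕ) (hn : 1 ≤ n) {a b : ℝ} (hab : a < b)
    (γ : ℝ → EuclideanSpace ℝ (Fin n)) (hcont : ContinuousOn γ (Icc a b))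
    (hrect : eVariationOn γ (Icc a b) ≠ ⊤)
    (lγ : ℝ → ℝ) (hl : lγ = fun t => (eVariationOn γ (Icc a t)).toReal) :
    ∀ᵐ t ∂(volume.restrict (Ioo a b)),
      ∃ v : EuclideanSpace ℝ (Fin n), HasDerivAt γ v t ∧ HasDerivAt lγ ‖v‖ t := by
  classical
  have hab' : a ≤ b := hab.le
  -- choose a sequence of partitions almost achieving the total variation
  have hpart : ∀ k : ℕ, ∃ m : ℕ, ∃ u : ℕ → ℝ, Monotone u ∧ (∀ i, u i ∈ Icc a b) ∧
      (eVariationOn γ (Icc a b)).toReal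
        - ∑ i ∈ Finset.range m, dist (γ (u (i+1))) (γ (u i)) ≤ (1/2 : ℝ)^k :=
    fun k => exists_partition hab' hrect (by positivity)
  choose m u hu hus hsum using hpart
  set L : ℝ → ℝ := Lfun γ a b with hLdef
  set g : ℕ → ℝ → ℝ := fun k => gfun γ (u k) (m k) with hgdef
  set h : ℕ → ℝ → ℝ := fun k t => L t - g k t with hhdef
  have hhmono : ∀ k, Monotone (h k) := by
    intro k s t hst
    have := g_sub_mono (m := m k) hab' hrect (hu k) (hus k) hst
    show L s - g k s ≤ L t - g k t
    linarith
  have hclo : ∀ k, ∀ x : ℝ, x ≤ a → h k x = h k a := by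
    intro k x hx
    show Lfun γ a b x - gfun γ (u k) (m k) x = Lfun γ a b a - gfun γ (u k) (m k) a
    rw [Lfun_le_a hx, Lfun_le_a le_rfl, gfun_le_a (hus k) hx, gfun_le_a (hus k) le_rfl]
  have hchi : ∀ k, ∀ x : ℝ, b ≤ x → h k x = h k b := by
    intro k x hx
    show Lfun γ a b x - gfun γ (u k) (m k) x = Lfun γ a b b - gfun γ (u k) (m k) b
    rw [Lfun_ge_b hab' hx, Lfun_ge_b hab' le_rfl, gfun_ge_b (hu k) (hus k) hx,
      gfun_ge_b (hu k) (hus k) le_rfl]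
  have hmass : ∀ k, h k b - h k a ≤ (1/2 : ℝ)^k := by
    intro k
    show Lfun γ a b b - gfun γ (u k) (m k) b - (Lfun γ a b a - gfun γ (u k) (m k) a) ≤ _
    rw [Lfun_ge_b hab' le_rfl, Lfun_le_a le_rfl, gfun_le_a (hus k) le_rfl,
      gfun_ge_b (hu k) (hus k) le_rfl]
    simpa using hsum k
  -- a.e. facts
  have hγbv : LocallyBoundedVariationOn γ (Icc a b) :=
    BoundedVariationOn.locallyBoundedVariationOn hrect
  have hγdiff : ∀ᵐ x : ℝ, x ∈ Icc a b → DifferentiableWithinAt ℝ γ (Icc a b) x :=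
    hγbv.ae_differentiableWithinAt_of_mem
  have hLmono : Monotone L := Lfun_mono hab' hrect
  have hLd : ∀ᵐ x : ℝ, ∃ ℓ : ℝ, HasDerivAt L ℓ x := by
    filter_upwards [hLmono.ae_hasDerivAt] with x hx using ⟨_, hx⟩
  have havoid : ∀ᵐ x : ℝ, ∀ k, ∀ i ≤ m k, u k i ≠ x := by
    rw [ae_all_iff]
    intro k
    have hfin : (u k '' (Iic (m k))).Finite := (Set.finite_Iic (m k)).image (u k)
    have h0 : volume (u k '' (Iic (m k))) = 0 := hfin.measure_zero _
    filter_upwards [measure_eq_zero_iff_ae_notMem.mp h0] with x hx i hi hix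
    exact hx ⟨i, hi, hix⟩
  rw [ae_restrict_iff' measurableSet_Ioo]
  filter_upwards [hγdiff, hLd, ae_deriv_seq hhmono hclo hchi hmass, havoid]
    with t hγd hLd' hds havoid' htIoo
  obtain ⟨d, hd, hdpos, hdlim⟩ := hds
  obtain ⟨ℓ, hℓ⟩ := hLd'
  have htmem : t ∈ Icc a b := ⟨htIoo.1.le, htIoo.2.le⟩
  have hγdiff' : DifferentiableAt ℝ γ t :=
    (hγd htmem).differentiableAt (Icc_mem_nhds htIoo.1 htIoo.2)
  obtain ⟨v, hv⟩ : ∃ v, HasDerivAt γ v t := ⟨_, hγdiff'.hasDerivAt⟩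
  -- slope limits from the right
  have hsub : Ioi t ⊆ {t}ᶜ := fun s hs => mem_compl_singleton_iff.2 (ne_of_gt hs)
  have hslopeL : Tendsto (slope L t) (𝓝[>] t) (𝓝 ℓ) :=
    (hasDerivAt_iff_tendsto_slope.1 hℓ).mono_left (nhdsWithin_mono t hsub)
  have hslopeγ : Tendsto (fun s => ‖slope γ t s‖) (𝓝[>] t) (𝓝 ‖v‖) :=
    ((hasDerivAt_iff_tendsto_slope.1 hv).mono_left (nhdsWithin_mono t hsub)).norm
  have hslopeh : ∀ k, Tendsto (slope (h k) t) (𝓝[>] t) (𝓝 (d k)) := fun k =>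
    (hasDerivAt_iff_tendsto_slope.1 (hd k)).mono_left (nhdsWithin_mono t hsub)
  have hnormslope : ∀ s : ℝ, t < s → ‖slope γ t s‖ = dist (γ s) (γ t) / (s - t) := by
    intro s hts
    rw [slope_def_module, norm_smul, dist_eq_norm, norm_inv, Real.norm_eq_abs,
      abs_of_pos (by linarith : (0:ℝ) < s - t), div_eq_inv_mul]
  have hslopeLeq : ∀ s : ℝ, slope L t s = (L s - L t) / (s - t) := fun s =>
    slope_def_field L t s
  -- lower bound: ‖v‖ ≤ ℓ
  have lower : ‖v‖ ≤ ℓ := by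
    refine le_of_tendsto_of_tendsto hslopeγ hslopeL ?_
    filter_upwards [Ioo_mem_nhdsGT_of_mem (Set.left_mem_Ico.2 htIoo.2)] with s hs
    rw [hnormslope s hs.1, hslopeLeq s]
    have hdd : dist (γ s) (γ t) ≤ L s - L t :=
      dist_le_Lfun_sub hrect htIoo.1.le hs.1.le hs.2.le
    have hpos : (0:ℝ) < s - t := by linarith [hs.1]
    gcongr
  -- upper bound: ℓ ≤ d k + ‖v‖ for all k
  have upper : ∀ k, ℓ ≤ d k + ‖v‖ := by
    intro k
    obtain ⟨β, htβ, hβ⟩ := gfun_local (γ := γ) (m := m k) (hu k) (fun i hi => havoid' k i hi)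
    refine le_of_tendsto_of_tendsto hslopeL ((hslopeh k).add hslopeγ) ?_
    filter_upwards [Ioo_mem_nhdsGT_of_mem (Set.left_mem_Ico.2 (lt_min htIoo.2 htβ))] with s hs
    have hts : t < s := hs.1
    have hsb : s < b := lt_of_lt_of_le hs.2 (min_le_left _ _)
    have hsβ : s < β := lt_of_lt_of_le hs.2 (min_le_right _ _)
    have hgb : g k s - g k t ≤ dist (γ s) (γ t) := hβ s hts hsβ
    have hLs : L s - L t ≤ (h k s - h k t) + dist (γ s) (γ t) := by
      have hh1 : h k s = L s - g k s := rfl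
      have hh2 : h k t = L t - g k t := rfl
      rw [hh1, hh2]
      linarith
    have hpos : (0:ℝ) < s - t := by linarith
    show slope L t s ≤ slope (h k) t s + ‖slope γ t s‖
    rw [hslopeLeq s, hnormslope s hts, slope_def_field, ← add_div]
    gcongr
  have upper' : ℓ ≤ ‖v‖ := by
    have hlim : Tendsto (fun k => d k + ‖v‖) atTop (𝓝 (0 + ‖v‖)) :=
      hdlim.add tendsto_const_nhds
    rw [zero_add] at hlim
    exact ge_of_tendsto hlim (Eventually.of_forall upper)
  have key : ℓ = ‖v‖ := le_antisymm upper' lower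
  -- transfer derivative from L to lγ
  have hlL : lγ =ᶠ[𝓝 t] L := by
    filter_upwards [IsOpen.mem_nhds isOpen_Iio htIoo.2] with s (hs : s < b)
    rw [hl]
    dsimp only
    rcases le_or_gt a s with h1 | h1
    · rw [hLdef, Lfun_eq h1 hs.le]
    · rw [hLdef, Lfun_le_a h1.le]
      rw [Icc_eq_empty (not_le.2 h1), eVariationOn.subsingleton γ subsingleton_empty]
      simp
  have hlγ : HasDerivAt lγ ℓ t := hℓ.congr_of_eventuallyEq hlL
  exact ⟨v, hv, key ▸ hlγ⟩
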